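/- Let X be a real random variable with mean μ and finite variance σ². Then for every t > √8·σ, P(|X − μ| > t) ≤ 4·P(|X| > t/4). -/

import Mathlib

open MeasureTheory ProbabilityTheory

/-- Symmetrization bound: if `X` has mean `μ` and finite variance `σ²`, then for every
`t > √8 · σ`, `P(|X − μ| > t) ≤ 4 · P(|X| > t/4)`. -/
theorem stmt_0 {Ω : Type*} [MeasureSpace Ω] [IsProbabilityMeasure (ℙ : Measure Ω)]
    (X : Ω → ℝ) (hX : MemLp X 2 ℙ) (μ σ : ℝ)
    (hμ : μ = ∫ ω, X ω) (hσ : σ ^ 2 = variance X ℙ) (hσ0 : 0 ≤ σ) :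
    ∀ t : ℝ, Real.sqrt 8 * σ < t →
      ℙ {ω | t < |X ω - μ|} ≤ 4 * ℙ {ω | t / 4 < |X ω|} := by
  intro t ht
  have ht0 : 0 < t := lt_of_le_of_lt (by positivity) ht
  have ht2 : 8 * σ ^ 2 < t ^ 2 := by
    have h8 : Real.sqrt 8 * σ ≥ 0 := by positivity
    nlinarith [mul_self_lt_mul_self h8 ht, Real.sq_sqrt (by norm_num : (8:ℝ) ≥ 0).le,
      Real.sq_sqrt (show (0:ℝ) ≤ 8 by norm_num)]
  by_cases hcase : |μ| ≤ 3 * t / 4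
  · -- {t < |X - μ|} ⊆ {t/4 < |X|}
    refine le_trans (measure_mono ?_) (le_mul_of_one_le_left zero_le (by norm_num))
    intro ω hω
    simp only [Set.mem_setOf_eq] at hω ⊢
    have := abs_sub_abs_le_abs_sub (X ω - μ) (-μ)
    simp only [sub_neg_eq_add, sub_add_cancel, abs_neg] at this
    linarith
  · push_neg at hcase
    -- Chebyshev with c = t/2
    have cheb : ℙ {ω | t / 2 ≤ |X ω - μ|} ≤ ENNReal.ofReal (variance X ℙ / (t / 2) ^ 2) := by
      have := meas_ge_le_variance_div_sq (μ := (ℙ : Measure Ω)) hX (show (0:ℝ) < t / 2 by linarith)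
      simpa [← hμ] using this
    have hle : (variance X ℙ) / (t / 2) ^ 2 ≤ 1 / 2 := by
      rw [div_le_div_iff₀ (by positivity) (by norm_num), ← hσ]
      nlinarith
    have cheb2 : ℙ {ω | t / 2 ≤ |X ω - μ|} ≤ 1 / 2 := by
      refine cheb.trans ?_
      calc ENNReal.ofReal (variance X ℙ / (t / 2) ^ 2) ≤ ENNReal.ofReal (1 / 2) :=
            ENNReal.ofReal_le_ofReal hle
        _ = 1 / 2 := by
            rw [ENNReal.ofReal_div_of_pos (by norm_num)]; norm_num
    -- complement
    have hsub : {ω | t / 2 ≤ |X ω - μ|}ᶜ ⊆ {ω | t / 4 < |X ω|} := by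
      intro ω hω
      simp only [Set.mem_compl_iff, Set.mem_setOf_eq, not_le] at hω ⊢
      have := abs_sub_abs_le_abs_sub μ (μ - X ω)
      have h2 : |μ - X ω| = |X ω - μ| := abs_sub_comm _ _
      simp only [sub_sub_cancel] at this
      rw [h2] at this
      linarith
    have hcompl : (1 : ENNReal) / 2 ≤ ℙ {ω | t / 4 < |X ω|} := by
      refine le_trans ?_ (measure_mono hsub)
      have h1 : (1 : ENNReal) ≤ ℙ {ω | t / 2 ≤ |X ω - μ|} + ℙ {ω | t / 2 ≤ |X ω - μ|}ᶜ := by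
        rw [← measure_univ (μ := (ℙ : Measure Ω))]
        exact (measure_univ_le_add_compl _).trans le_rfl
      have := tsub_le_iff_left.mpr h1
      refine le_trans ?_ this
      have : (1 : ENNReal) - 1 / 2 ≤ 1 - ℙ {ω | t / 2 ≤ |X ω - μ|} :=
        tsub_le_tsub_left cheb2 1
      calc (1:ENNReal)/2 = 1 - 1/2 := (ENNReal.sub_half ENNReal.one_ne_top).symm
        _ ≤ _ := this
    calc ℙ {ω | t < |X ω - μ|} ≤ 1 := prob_le_one
      _ ≤ 4 * ℙ {ω | t / 4 < |X ω|} := by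
          have h4 : (4:ENNReal) * (1/2) = 2 := by
            rw [show (4:ENNReal) = 2 * 2 by norm_num, mul_assoc,
              ENNReal.mul_div_cancel two_ne_zero ENNReal.ofNat_ne_top, mul_one]
          calc (1:ENNReal) ≤ 2 := one_le_two
            _ = 4 * (1/2) := h4.symm
            _ ≤ 4 * ℙ {ω | t / 4 < |X ω|} := mul_le_mul_right hcompl 4
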